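/- Let X, Y be complete separable metric spaces with fully supported Borel probability measures μ_X, μ_Y, and let F_X ⊆ Lip₁(X, ℝ), F_Y ⊆ Lip₁(Y, ℝ) be families of 1-Lipschitz functions. Let π be a coupling of μ_X and μ_Y and suppose D := H_{d_KF^π}(F_X ∘ pr₁, F_Y ∘ pr₂) < 1 (Hausdorff distance with respect to the Ky Fan metric on (X × Y, π)). Then for every f in the closure F̄_X (in convergence in measure) there exists g ∈ F̄_Y such that d_KF^π(f ∘ pr₁, g ∘ pr₂) ≤ D. -/

import Mathlib

open MeasureTheory Set Filter
open scoped ENNReal Topology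

/-- The Ky Fan (extended) distance between two maps into a pseudo-emetric space. -/
noncomputable def eKyFan {X Y : Type*} [MeasurableSpace X] [PseudoEMetricSpace Y]
    (μ : Measure X) (f g : X → Y) : ℝ≥0∞ :=
  sInf {ε : ℝ≥0∞ | μ {x | ε < edist (f x) (g x)} ≤ ε}

/-- Hausdorff distance between two families of functions with respect to the
Ky Fan metric. -/
noncomputable def hausKF {X : Type*} [MeasurableSpace X]
    (μ : Measure X) (A B : Set (X → ℝ)) : ℝ≥0∞ :=
  max (⨆ f ∈ A, ⨅ g ∈ B, eKyFan μ f g) (⨆ g ∈ B, ⨅ f ∈ A, eKyFan μ f g)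

/-- The closure of a family of functions with respect to the Ky Fan metric
(convergence in measure). -/
def closKF {X : Type*} [MeasurableSpace X] (μ : Measure X)
    (F : Set (X → ℝ)) : Set (X → ℝ) :=
  {g | ∀ ε : ℝ≥0∞, 0 < ε → ∃ f ∈ F, eKyFan μ f g < ε}

section eKyFanAPI

variable {X Y : Type*} [MeasurableSpace X] [PseudoEMetricSpace Y] {μ : Measure X}
  {f g h : X → Y} {ε ε' : ℝ≥0∞}

lemma eKyFan_le (hε : μ {x | ε < edist (f x) (g x)} ≤ ε) : eKyFan μ f g ≤ ε := sInf_le hε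

lemma eKyFan_mem_of_le (hε : μ {x | ε < edist (f x) (g x)} ≤ ε) (hle : ε ≤ ε') :
    μ {x | ε' < edist (f x) (g x)} ≤ ε' :=
  le_trans (le_trans (measure_mono fun _ hx => lt_of_le_of_lt hle hx) hε) hle

lemma eKyFan_meas_le_of_lt (hlt : eKyFan μ f g < ε) :
    μ {x | ε < edist (f x) (g x)} ≤ ε := by
  obtain ⟨δ, hδ, hδε⟩ := sInf_lt_iff.mp hlt
  exact eKyFan_mem_of_le hδ hδε.le

lemma eKyFan_comm : eKyFan μ f g = eKyFan μ g f := by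
  unfold eKyFan; congr 1; ext ε; simp [edist_comm]

lemma eKyFan_triangle : eKyFan μ f h ≤ eKyFan μ f g + eKyFan μ g h := by
  apply ENNReal.le_of_forall_pos_le_add
  intro δ hδ hfin
  have h1 : eKyFan μ f g < eKyFan μ f g + δ / 2 := by
    refine ENNReal.lt_add_right (ne_top_of_le_ne_top hfin.ne le_self_add) ?_
    simp [ENNReal.div_eq_zero_iff, hδ.ne']
  have h2 : eKyFan μ g h < eKyFan μ g h + δ / 2 := by
    refine ENNReal.lt_add_right (ne_top_of_le_ne_top hfin.ne le_add_self) ?_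
    simp [ENNReal.div_eq_zero_iff, hδ.ne']
  have m1 := eKyFan_meas_le_of_lt h1
  have m2 := eKyFan_meas_le_of_lt h2
  set a := eKyFan μ f g + δ / 2
  set b := eKyFan μ g h + δ / 2
  have hsub : {x | a + b < edist (f x) (h x)} ⊆
      {x | a < edist (f x) (g x)} ∪ {x | b < edist (g x) (h x)} := by
    intro x hx
    by_contra hc
    simp only [mem_union, mem_setOf_eq, not_or, not_lt] at hc
    simp only [mem_setOf_eq] at hx
    exact absurd (lt_of_lt_of_le hx ((edist_triangle _ (g x) _)))
      (not_lt.mpr (add_le_add hc.1 hc.2))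
  have : eKyFan μ f h ≤ a + b :=
    eKyFan_le (le_trans (measure_mono hsub) (le_trans (measure_union_le _ _) (add_le_add m1 m2)))
  calc eKyFan μ f h ≤ a + b := this
    _ = eKyFan μ f g + eKyFan μ g h + δ := by
        rw [show (δ:ℝ≥0∞) = δ/2 + δ/2 by rw [ENNReal.add_halves]]; ring

lemma eKyFan_comp_le {Z : Type*} [MeasurableSpace Z] {π : Measure Z} {p : Z → X}
    (hp : AEMeasurable p π) {ν : Measure X} (hmap : π.map p = ν) (u v : X → Y) :
    eKyFan π (u ∘ p) (v ∘ p) ≤ eKyFan ν u v := by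
  apply sInf_le_sInf
  intro ε hε
  have : π {z | ε < edist ((u ∘ p) z) ((v ∘ p) z)} ≤ ν {x | ε < edist (u x) (v x)} := by
    rw [← hmap]
    exact Measure.le_map_apply hp _
  exact le_trans this hε

end eKyFanAPI

lemma eKyFan_tendsto_zero {X : Type*} [MeasurableSpace X] {μ : Measure X} [IsFiniteMeasure μ]
    {g : ℕ → X → ℝ} {G : X → ℝ} (hmeas : ∀ n, AEStronglyMeasurable (g n) μ)
    (hpt : ∀ x, Tendsto (fun n => g n x) atTop (𝓝 (G x))) :
    Tendsto (fun n => eKyFan μ (g n) G) atTop (𝓝 0) := by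
  have htm : TendstoInMeasure μ g atTop G :=
    tendstoInMeasure_of_tendsto_ae hmeas (ae_of_all _ hpt)
  rw [ENNReal.tendsto_nhds_zero]
  intro ε hε
  set e : ℝ≥0∞ := min ε 1 with he_def
  have he0 : 0 < e := lt_min hε one_pos
  have hefin : e ≠ ∞ := ne_top_of_le_ne_top ENNReal.one_ne_top (min_le_right _ _)
  have he2_0 : e / 2 ≠ 0 := by
    simp [ENNReal.div_eq_zero_iff, he0.ne']
  have he2fin : e / 2 ≠ ∞ := by
    simp [ENNReal.div_eq_top, hefin]
  set r : ℝ := (e / 2).toReal with hr_def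
  have hr0 : 0 < r := ENNReal.toReal_pos he2_0 he2fin
  have hofr : ENNReal.ofReal r = e / 2 := ENNReal.ofReal_toReal he2fin
  have hev : ∀ᶠ n in atTop, μ {x | r ≤ dist (g n x) (G x)} < ENNReal.ofReal r := by
    refine (tendstoInMeasure_iff_dist.mp htm r hr0).eventually_lt_const ?_
    rw [hofr]; exact pos_iff_ne_zero.mpr he2_0
  filter_upwards [hev] with n hn
  have hsub : {x | ENNReal.ofReal r < edist (g n x) (G x)} ⊆ {x | r ≤ dist (g n x) (G x)} := by
    intro x hx
    simp only [mem_setOf_eq] at hx ⊢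
    rw [edist_dist] at hx
    by_contra hc
    push_neg at hc
    exact absurd hx (not_lt.mpr (ENNReal.ofReal_le_ofReal hc.le))
  have : eKyFan μ (g n) G ≤ ENNReal.ofReal r :=
    eKyFan_le (le_trans (measure_mono hsub) hn.le)
  refine le_trans this ?_
  rw [hofr]
  exact le_trans (ENNReal.half_le_self) (min_le_left _ _)

lemma exists_subseq_tendsto_pointwise {Y : Type*} [MetricSpace Y]
    [TopologicalSpace.SeparableSpace Y] [Nonempty Y]
    {g : ℕ → Y → ℝ} (hg : ∀ n, LipschitzWith 1 (g n)) {y₀ : Y} {C : ℝ}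
    (hb : ∀ n, |g n y₀| ≤ C) :
    ∃ (G : Y → ℝ) (φ : ℕ → ℕ), StrictMono φ ∧ LipschitzWith 1 G ∧
      ∀ y, Tendsto (fun k => g (φ k) y) atTop (𝓝 (G y)) := by
  obtain ⟨e, he⟩ : ∃ e : ℕ → Y, DenseRange e :=
    ⟨TopologicalSpace.denseSeq Y, TopologicalSpace.denseRange_denseSeq Y⟩
  have hlip : ∀ n (a b : Y), dist (g n a) (g n b) ≤ dist a b := fun n a b => by
    simpa using (hg n).dist_le_mul a b
  have hbd : ∀ n y, |g n y| ≤ C + dist y y₀ := by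
    intro n y
    calc |g n y| = |g n y₀ + (g n y - g n y₀)| := by ring_nf
      _ ≤ |g n y₀| + |g n y - g n y₀| := abs_add_le _ _
      _ ≤ C + dist y y₀ := by
          gcongr
          · exact hb n
          · rw [← Real.dist_eq]; exact hlip n y y₀
  set K : Set (ℕ → ℝ) := univ.pi fun k => Icc (-(C + dist (e k) y₀)) (C + dist (e k) y₀)
    with hK
  have hKc : IsCompact K := isCompact_univ_pi fun k => isCompact_Icc
  have hmem : ∀ n, (fun k => g n (e k)) ∈ K := by
    intro n k _
    have := hbd n (e k)
    rw [abs_le] at this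
    exact ⟨this.1, this.2⟩
  obtain ⟨a, -, φ, hφ, ha⟩ := hKc.tendsto_subseq hmem
  have hak : ∀ k, Tendsto (fun i => g (φ i) (e k)) atTop (𝓝 (a k)) := by
    intro k
    exact (tendsto_pi_nhds.mp ha k)
  have hcauchy : ∀ y, CauchySeq fun i => g (φ i) y := by
    intro y
    rw [Metric.cauchySeq_iff]
    intro ε hε
    obtain ⟨k, hk⟩ := Metric.denseRange_iff.mp he y (ε / 4) (by linarith)
    have hck : CauchySeq fun i => g (φ i) (e k) := (hak k).cauchySeq
    obtain ⟨N, hN⟩ := Metric.cauchySeq_iff.mp hck (ε / 2) (by linarith)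
    refine ⟨N, fun m hm n hn => ?_⟩
    calc dist (g (φ m) y) (g (φ n) y)
        ≤ dist (g (φ m) y) (g (φ m) (e k)) + dist (g (φ m) (e k)) (g (φ n) (e k))
          + dist (g (φ n) (e k)) (g (φ n) y) := dist_triangle4 _ _ _ _
      _ < ε / 4 + ε / 2 + ε / 4 := by
          have h1 : dist (g (φ m) y) (g (φ m) (e k)) ≤ dist y (e k) := hlip _ _ _
          have h2 : dist (g (φ n) (e k)) (g (φ n) y) ≤ dist (e k) y := hlip _ _ _
          rw [dist_comm (e k) y] at h2
          have := hN m hm n hn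
          have hky : dist y (e k) < ε / 4 := hk
          gcongr <;> linarith
      _ = ε := by ring
  have hconv : ∀ y, ∃ L, Tendsto (fun i => g (φ i) y) atTop (𝓝 L) := fun y =>
    cauchySeq_tendsto_of_complete (hcauchy y)
  choose G hG using hconv
  refine ⟨G, φ, hφ, ?_, hG⟩
  refine LipschitzWith.of_dist_le_mul fun a b => ?_
  have : Tendsto (fun i => dist (g (φ i) a) (g (φ i) b)) atTop (𝓝 (dist (G a) (G b))) :=
    (hG a).dist (hG b)
  have hle : ∀ i, dist (g (φ i) a) (g (φ i) b) ≤ dist a b := fun i => hlip _ _ _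
  simpa using le_of_tendsto this (Eventually.of_forall hle)

theorem exists_partner_in_closure {X Y : Type*}
    [MetricSpace X] [CompleteSpace X] [TopologicalSpace.SeparableSpace X]
    [MeasurableSpace X] [BorelSpace X]
    [MetricSpace Y] [CompleteSpace Y] [TopologicalSpace.SeparableSpace Y]
    [MeasurableSpace Y] [BorelSpace Y]
    (μX : Measure X) (μY : Measure Y)
    [IsProbabilityMeasure μX] [IsProbabilityMeasure μY]
    (hsX : ∀ U : Set X, IsOpen U → U.Nonempty → 0 < μX U)
    (hsY : ∀ U : Set Y, IsOpen U → U.Nonempty → 0 < μY U)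
    (FX : Set (X → ℝ)) (FY : Set (Y → ℝ))
    (hFX : ∀ f ∈ FX, LipschitzWith 1 f) (hFY : ∀ g ∈ FY, LipschitzWith 1 g)
    (π : Measure (X × Y)) [IsProbabilityMeasure π]
    (hπ1 : π.map Prod.fst = μX) (hπ2 : π.map Prod.snd = μY)
    (hD : hausKF π ((fun f => f ∘ Prod.fst) '' FX) ((fun g => g ∘ Prod.snd) '' FY) < 1) :
    ∀ f ∈ closKF μX FX, ∃ g ∈ closKF μY FY,
      eKyFan π (f ∘ Prod.fst) (g ∘ Prod.snd) ≤
        hausKF π ((fun f => f ∘ Prod.fst) '' FX) ((fun g => g ∘ Prod.snd) '' FY) := by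
  intro f hf
  -- nonemptiness of X and Y
  have hXne : Nonempty X := by
    by_contra hcon
    rw [not_nonempty_iff] at hcon
    have h1 : μX Set.univ = 1 := measure_univ
    rw [Set.univ_eq_empty_iff.mpr hcon, measure_empty] at h1
    exact zero_ne_one h1
  have hYne : Nonempty Y := by
    by_contra hcon
    rw [not_nonempty_iff] at hcon
    have h1 : μY Set.univ = 1 := measure_univ
    rw [Set.univ_eq_empty_iff.mpr hcon, measure_empty] at h1
    exact zero_ne_one h1
  set D := hausKF π ((fun f => f ∘ Prod.fst) '' FX) ((fun g => g ∘ Prod.snd) '' FY)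
    with hDdef
  have hDfin : D ≠ ∞ := (hD.trans ENNReal.one_lt_top).ne
  set r : ℝ≥0∞ := 1 - D with hrdef
  have hr0 : 0 < r := tsub_pos_of_lt hD
  have hr1 : r ≤ 1 := tsub_le_self
  have hrfin : r ≠ ∞ := ne_top_of_le_ne_top ENNReal.one_ne_top hr1
  set δ : ℝ≥0∞ := r / 8 with hδdef
  have hδ0 : δ ≠ 0 := by
    simp [hδdef, ENNReal.div_eq_zero_iff, hr0.ne', hrfin]
  have hδfin : δ ≠ ∞ := by
    simp [hδdef, ENNReal.div_eq_top, hrfin]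
  have hδle1 : δ ≤ 1 := by
    refine le_trans ?_ hr1
    calc δ = r * 8⁻¹ := by rw [hδdef, ENNReal.div_eq_inv_mul, mul_comm]
      _ ≤ r * 1 := mul_le_mul_right (ENNReal.inv_le_one.mpr (by norm_num)) r
      _ = r := mul_one r
  set D' : ℝ≥0∞ := D + 4 * δ with hD'def
  have hD'fin : D' ≠ ∞ :=
    ENNReal.add_ne_top.mpr ⟨hDfin, ENNReal.mul_ne_top (by norm_num) hδfin⟩
  -- the sequence of tolerances
  set ε : ℕ → ℝ≥0∞ := fun n => δ * 2⁻¹ ^ (n + 2) with hεdef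
  have hε0 : ∀ n, 0 < ε n := fun n =>
    pos_iff_ne_zero.mpr (mul_ne_zero hδ0 (pow_ne_zero _ (ENNReal.inv_ne_zero.mpr
      ENNReal.ofNat_ne_top)))
  have hεle' : ∀ n, ε n ≤ δ * 2⁻¹ ^ 2 := fun n =>
    mul_le_mul_right (pow_le_pow_of_le_one zero_le
      (ENNReal.inv_le_one.mpr one_le_two) (by omega)) δ
  have hεδ : ∀ n, ε n ≤ δ := fun n => by
    refine le_trans (hεle' n) ?_
    calc δ * 2⁻¹ ^ 2 ≤ δ * 1 :=
          mul_le_mul_right (pow_le_one' (ENNReal.inv_le_one.mpr one_le_two) 2) δ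
      _ = δ := mul_one δ
  have hεtend : Tendsto ε atTop (𝓝 0) := by
    have hp : Tendsto (fun n : ℕ => (2 : ℝ≥0∞)⁻¹ ^ (n + 2)) atTop (𝓝 0) :=
      (ENNReal.tendsto_pow_atTop_nhds_zero_of_lt_one ENNReal.one_half_lt_one).comp
        (tendsto_add_atTop_nat 2)
    have := ENNReal.Tendsto.const_mul (a := δ) hp (Or.inr hδfin)
    simpa using this
  -- choose approximating sequence fₙ ∈ FX
  have hfn' : ∀ n, ∃ fn ∈ FX, eKyFan μX fn f < ε n := fun n => hf (ε n) (hε0 n)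
  choose fn hfnF hfnd using hfn'
  have hfl : ∀ n, LipschitzWith 1 (fn n) := fun n => hFX _ (hfnF n)
  -- choose partners gₙ ∈ FY
  have hA : (⨆ u ∈ ((fun f => f ∘ Prod.fst) '' FX),
      ⨅ v ∈ ((fun g => g ∘ Prod.snd) '' FY), eKyFan π u v) ≤ D := by
    rw [hDdef]; unfold hausKF; exact le_max_left _ _
  have hgn' : ∀ n, ∃ gnn, gnn ∈ FY ∧
      eKyFan π (fn n ∘ Prod.fst) (gnn ∘ Prod.snd) < D + ε n := by
    intro n
    have h1 : (⨅ v ∈ ((fun g => g ∘ Prod.snd) '' FY),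
        eKyFan π (fn n ∘ Prod.fst) v) < D + ε n :=
      lt_of_le_of_lt (le_trans (le_biSup
          (fun u => ⨅ v ∈ ((fun g => g ∘ Prod.snd) '' FY), eKyFan π u v)
          (Set.mem_image_of_mem (fun f => f ∘ Prod.fst) (hfnF n))) hA)
        (ENNReal.lt_add_right hDfin (hε0 n).ne')
    rw [iInf_lt_iff] at h1
    obtain ⟨v, hv⟩ := h1
    rw [iInf_lt_iff] at hv
    obtain ⟨hvmem, hv⟩ := hv
    obtain ⟨gnn, hgmem, rfl⟩ := hvmem
    exact ⟨gnn, hgmem, hv⟩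
  choose gn hgnF hgnd using hgn'
  have hgl : ∀ n, LipschitzWith 1 (gn n) := fun n => hFY _ (hgnF n)
  -- fₙ is close to f₀
  have hff : ∀ n, eKyFan μX (fn n) (fn 0) < δ := by
    intro n
    calc eKyFan μX (fn n) (fn 0) ≤ eKyFan μX (fn n) f + eKyFan μX f (fn 0) := eKyFan_triangle
      _ < ε n + ε 0 := ENNReal.add_lt_add (hfnd n) (by rw [eKyFan_comm]; exact hfnd 0)
      _ ≤ δ * 2⁻¹ ^ 2 + δ * 2⁻¹ ^ 2 := add_le_add (hεle' n) (hεle' 0)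
      _ = δ * 2⁻¹ := by
          rw [← mul_add, show (2:ℝ≥0∞)⁻¹ ^ 2 + 2⁻¹ ^ 2 = 2⁻¹ by
            rw [pow_two, ← two_mul, ← mul_assoc,
              ENNReal.mul_inv_cancel two_ne_zero ENNReal.ofNat_ne_top, one_mul]]
      _ < δ * 1 := by
          rw [mul_comm δ _, mul_comm δ _]
          exact ENNReal.mul_lt_mul_left hδ0 hδfin ENNReal.one_half_lt_one
      _ = δ := mul_one δ
  -- big balls
  set x₀ : X := Classical.arbitrary X with hx₀
  set y₀ : Y := Classical.arbitrary Y with hy₀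
  have hballX : ∃ m : ℕ, 1 - δ < μX (Metric.ball x₀ m) := by
    have hmono : Monotone fun m : ℕ => Metric.ball x₀ (m : ℝ) := fun i j hij =>
      Metric.ball_subset_ball (by exact_mod_cast hij)
    have ht := tendsto_measure_iUnion_atTop (μ := μX) hmono
    rw [Metric.iUnion_ball_nat, measure_univ] at ht
    exact (Tendsto.eventually_const_lt
      (ENNReal.sub_lt_self ENNReal.one_ne_top one_ne_zero hδ0) ht).exists
  obtain ⟨m, hm⟩ := hballX
  have hballY : ∃ m : ℕ, 1 - δ < μY (Metric.ball y₀ m) := by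
    have hmono : Monotone fun m : ℕ => Metric.ball y₀ (m : ℝ) := fun i j hij =>
      Metric.ball_subset_ball (by exact_mod_cast hij)
    have ht := tendsto_measure_iUnion_atTop (μ := μY) hmono
    rw [Metric.iUnion_ball_nat, measure_univ] at ht
    exact (Tendsto.eventually_const_lt
      (ENNReal.sub_lt_self ENNReal.one_ne_top one_ne_zero hδ0) ht).exists
  obtain ⟨m', hm'⟩ := hballY
  have hcomplX : μX (Metric.ball x₀ (m : ℝ))ᶜ ≤ δ := by
    rw [measure_compl measurableSet_ball (measure_ne_top μX _), measure_univ]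
    calc (1 : ℝ≥0∞) - μX (Metric.ball x₀ (m : ℝ)) ≤ 1 - (1 - δ) := tsub_le_tsub_left hm.le 1
      _ = δ := ENNReal.sub_sub_cancel ENNReal.one_ne_top hδle1
  have hcomplY : μY (Metric.ball y₀ (m' : ℝ))ᶜ ≤ δ := by
    rw [measure_compl measurableSet_ball (measure_ne_top μY _), measure_univ]
    calc (1 : ℝ≥0∞) - μY (Metric.ball y₀ (m' : ℝ)) ≤ 1 - (1 - δ) := tsub_le_tsub_left hm'.le 1
      _ = δ := ENNReal.sub_sub_cancel ENNReal.one_ne_top hδle1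
  -- the Ky Fan distance of the pairs is < D'
  have hεlt4δ : ∀ n, ε n < 4 * δ := by
    intro n
    refine lt_of_le_of_lt (hεδ n) ?_
    calc δ = 1 * δ := (one_mul δ).symm
      _ < 4 * δ := ENNReal.mul_lt_mul_left hδ0 hδfin (by norm_num)
  have hKF' : ∀ n, eKyFan π (fn n ∘ Prod.fst) (gn n ∘ Prod.snd) < D' := fun n =>
    (hgnd n).trans (by rw [hD'def]; exact ENNReal.add_lt_add_left hDfin (hεlt4δ n))
  -- uniform bound for gₙ at y₀
  set Cb : ℝ := (m' : ℝ) + D'.toReal + δ.toReal + m + |fn 0 x₀| with hCb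
  have hpoint : ∀ n, |gn n y₀| ≤ Cb := by
    intro n
    set U1 : Set (X × Y) :=
      {z | D' < edist ((fn n ∘ Prod.fst) z) ((gn n ∘ Prod.snd) z)} with hU1
    set U2 : Set (X × Y) :=
      Prod.fst ⁻¹' {x | δ < edist (fn n x) (fn 0 x)} with hU2
    set U3 : Set (X × Y) := Prod.fst ⁻¹' (Metric.ball x₀ (m : ℝ))ᶜ with hU3
    set U4 : Set (X × Y) := Prod.snd ⁻¹' (Metric.ball y₀ (m' : ℝ))ᶜ with hU4
    have hπU1 : π U1 ≤ D' := eKyFan_meas_le_of_lt (hKF' n)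
    have hπU2 : π U2 ≤ δ := by
      refine le_trans (Measure.le_map_apply measurable_fst.aemeasurable _) ?_
      rw [hπ1]
      exact eKyFan_meas_le_of_lt (hff n)
    have hπU3 : π U3 ≤ δ := by
      refine le_trans (Measure.le_map_apply measurable_fst.aemeasurable _) ?_
      rw [hπ1]; exact hcomplX
    have hπU4 : π U4 ≤ δ := by
      refine le_trans (Measure.le_map_apply measurable_snd.aemeasurable _) ?_
      rw [hπ2]; exact hcomplY
    have hUlt : π (U1 ∪ U2 ∪ U3 ∪ U4) < 1 := by
      have hsum : π (U1 ∪ U2 ∪ U3 ∪ U4) ≤ D' + δ + δ + δ := by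
        calc π (U1 ∪ U2 ∪ U3 ∪ U4) ≤ π (U1 ∪ U2 ∪ U3) + π U4 := measure_union_le _ _
          _ ≤ (π (U1 ∪ U2) + π U3) + π U4 := add_le_add_left (measure_union_le _ _) _
          _ ≤ ((π U1 + π U2) + π U3) + π U4 :=
              add_le_add_left (add_le_add_left (measure_union_le _ _) _) _
          _ ≤ D' + δ + δ + δ := by gcongr
      refine lt_of_le_of_lt hsum ?_
      have h7 : D' + δ + δ + δ = D + 7 * δ := by rw [hD'def]; ring
      have h78 : D + 7 * δ < D + 8 * δ :=
        ENNReal.add_lt_add_left hDfin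
          (ENNReal.mul_lt_mul_left hδ0 hδfin (by norm_num))
      have h8r : D + 8 * δ = 1 := by
        rw [hδdef, ENNReal.mul_div_cancel' (by norm_num) (by norm_num), hrdef,
          add_tsub_cancel_of_le hD.le]
      rw [h7, ← h8r]; exact h78
    have hne : ((U1 ∪ U2 ∪ U3 ∪ U4)ᶜ).Nonempty := by
      by_contra hcon
      rw [Set.not_nonempty_iff_eq_empty, Set.compl_empty_iff] at hcon
      rw [hcon, measure_univ] at hUlt
      exact lt_irrefl _ hUlt
    obtain ⟨z, hz⟩ := hne
    simp only [Set.mem_compl_iff, Set.mem_union, not_or, hU1, hU2, hU3, hU4,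
      Set.mem_preimage, Set.mem_setOf_eq, not_lt, Function.comp_apply] at hz
    obtain ⟨⟨⟨h1, h2⟩, h3⟩, h4⟩ := hz
    rw [Set.not_notMem, Metric.mem_ball] at h3 h4
    have hd1 : dist (fn n z.1) (gn n z.2) ≤ D'.toReal := by
      rw [dist_edist]; exact ENNReal.toReal_mono hD'fin h1
    have hd2 : dist (fn n z.1) (fn 0 z.1) ≤ δ.toReal := by
      rw [dist_edist]; exact ENNReal.toReal_mono hδfin h2
    have hl1 : dist (gn n y₀) (gn n z.2) ≤ dist y₀ z.2 := by
      simpa using (hgl n).dist_le_mul y₀ z.2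
    have hl2 : dist (fn 0 z.1) (fn 0 x₀) ≤ dist z.1 x₀ := by
      simpa using (hfl 0).dist_le_mul z.1 x₀
    have hy : dist y₀ z.2 < (m' : ℝ) := by rw [dist_comm]; exact h4
    have t1 : dist (gn n y₀) 0 ≤ dist (gn n y₀) (gn n z.2) + dist (gn n z.2) 0 :=
      dist_triangle _ _ _
    have t2 : dist (gn n z.2) 0 ≤ dist (gn n z.2) (fn n z.1) + dist (fn n z.1) 0 :=
      dist_triangle _ _ _
    have t3 : dist (fn n z.1) 0 ≤ dist (fn n z.1) (fn 0 z.1) + dist (fn 0 z.1) 0 :=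
      dist_triangle _ _ _
    have t4 : dist (fn 0 z.1) 0 ≤ dist (fn 0 z.1) (fn 0 x₀) + dist (fn 0 x₀) 0 :=
      dist_triangle _ _ _
    have habs1 : dist (gn n y₀) 0 = |gn n y₀| := Real.dist_0_eq_abs _
    have habs2 : dist (fn 0 x₀) 0 = |fn 0 x₀| := Real.dist_0_eq_abs _
    have hcd : dist (gn n z.2) (fn n z.1) = dist (fn n z.1) (gn n z.2) := dist_comm _ _
    rw [hCb]
    rw [habs1] at t1
    rw [habs2] at t4
    rw [hcd] at t2
    linarith
  -- extract pointwise-convergent subsequence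
  obtain ⟨G, φ, hφ, hGlip, hGtend⟩ := exists_subseq_tendsto_pointwise hgl hpoint
  have htz : Tendsto (fun k => eKyFan μY (gn (φ k)) G) atTop (𝓝 0) :=
    eKyFan_tendsto_zero (fun k => ((hgl (φ k)).continuous).aestronglyMeasurable) hGtend
  have hGclos : G ∈ closKF μY FY := by
    intro ε' hε'
    obtain ⟨k, hk⟩ := (htz.eventually_lt_const hε').exists
    exact ⟨gn (φ k), hgnF (φ k), hk⟩
  refine ⟨G, hGclos, ?_⟩
  have hchain : ∀ k, eKyFan π (f ∘ Prod.fst) (G ∘ Prod.snd) ≤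
      ε (φ k) + (D + ε (φ k)) + eKyFan μY (gn (φ k)) G := by
    intro k
    have e1 : eKyFan π (f ∘ Prod.fst) (fn (φ k) ∘ Prod.fst) ≤ ε (φ k) := by
      refine le_trans (eKyFan_comp_le measurable_fst.aemeasurable hπ1 f (fn (φ k))) ?_
      rw [eKyFan_comm]
      exact (hfnd (φ k)).le
    have e2 : eKyFan π (fn (φ k) ∘ Prod.fst) (gn (φ k) ∘ Prod.snd) ≤ D + ε (φ k) :=
      (hgnd (φ k)).le
    have e3 : eKyFan π (gn (φ k) ∘ Prod.snd) (G ∘ Prod.snd) ≤ eKyFan μY (gn (φ k)) G :=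
      eKyFan_comp_le measurable_snd.aemeasurable hπ2 _ _
    calc eKyFan π (f ∘ Prod.fst) (G ∘ Prod.snd)
        ≤ eKyFan π (f ∘ Prod.fst) (fn (φ k) ∘ Prod.fst) +
          eKyFan π (fn (φ k) ∘ Prod.fst) (G ∘ Prod.snd) := eKyFan_triangle
      _ ≤ eKyFan π (f ∘ Prod.fst) (fn (φ k) ∘ Prod.fst) +
          (eKyFan π (fn (φ k) ∘ Prod.fst) (gn (φ k) ∘ Prod.snd) +
            eKyFan π (gn (φ k) ∘ Prod.snd) (G ∘ Prod.snd)) :=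
          add_le_add_right eKyFan_triangle _
      _ ≤ ε (φ k) + ((D + ε (φ k)) + eKyFan μY (gn (φ k)) G) :=
          add_le_add e1 (add_le_add e2 e3)
      _ = ε (φ k) + (D + ε (φ k)) + eKyFan μY (gn (φ k)) G := (add_assoc _ _ _).symm
  have hφt : Tendsto (fun k => ε (φ k)) atTop (𝓝 0) := hεtend.comp hφ.tendsto_atTop
  have hlim : Tendsto (fun k => ε (φ k) + (D + ε (φ k)) + eKyFan μY (gn (φ k)) G)
      atTop (𝓝 D) := by
    have h1 : Tendsto (fun _ : ℕ => D) atTop (𝓝 D) := tendsto_const_nhds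
    have := (hφt.add (h1.add hφt)).add htz
    simpa using this
  exact ge_of_tendsto hlim (Eventually.of_forall hchain)
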